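/- (Criterion for p-adic irrationality) Fix a prime ℓ and let ξ be an element of the field ℚ_ℓ of ℓ-adic numbers. Suppose there exist δ > 0 and a sequence of rational numbers p_n/q_n (with integers p_n and q_n ≥ 1) such that p_n/q_n ≠ ξ for all n, q_n → ∞ as n → ∞, and the ℓ-adic absolute value satisfies ‖ξ − p_n/q_n‖_ℓ ≤ 1/(max{|p_n|, |q_n|})^{1+δ} for all n. Then ξ is not a rational number, i.e. ξ does not lie in the image of ℚ inside ℚ_ℓ. -/

import Mathlib

/-- Lower bound for the `ℓ`-adic norm of a nonzero integer. -/
lemma norm_int_ge (ℓ : ℕ) [Fact ℓ.Prime] {m : ℤ} (hm : m ≠ 0) :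
    (1 : ℝ) / |(m : ℝ)| ≤ ‖(m : ℚ_[ℓ])‖ := by
  have hp := (Fact.out : ℓ.Prime)
  have h1 : ((m : ℚ) : ℚ_[ℓ]) = (m : ℚ_[ℓ]) := by push_cast; ring
  rw [← h1, Padic.eq_padicNorm]
  have hmq : (m : ℚ) ≠ 0 := Int.cast_ne_zero.mpr hm
  rw [padicNorm.eq_zpow_of_nonzero hmq, padicValRat.of_int]
  set v := padicValInt ℓ m with hv
  have hdvd : ℓ ^ v ∣ m.natAbs := pow_padicValNat_dvd
  have hle : (ℓ : ℝ) ^ v ≤ |(m : ℝ)| := by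
    have := Nat.le_of_dvd (Int.natAbs_pos.mpr hm) hdvd
    calc (ℓ : ℝ) ^ v = ((ℓ ^ v : ℕ) : ℝ) := by push_cast; ring
    _ ≤ (m.natAbs : ℝ) := by exact_mod_cast this
    _ = |(m : ℝ)| := by rw [Nat.cast_natAbs]; push_cast; ring
  have hlpos : (0:ℝ) < (ℓ:ℝ) := by exact_mod_cast hp.pos
  have hpos : (0 : ℝ) < (ℓ : ℝ) ^ v := pow_pos hlpos v
  have : ((((ℓ : ℚ) ^ (-(v : ℤ)) : ℚ)) : ℝ) = 1 / (ℓ : ℝ) ^ v := by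
    push_cast
    rw [zpow_neg, zpow_natCast, one_div]
  rw [this]
  exact div_le_div_of_nonneg_left one_pos.le hpos hle

set_option maxHeartbeats 1000000 in
/-- (Criterion for `ℓ`-adic irrationality) Let `ℓ` be a prime and `ξ ∈ ℚ_ℓ`.
If there are `δ > 0` and sequences `p : ℕ → ℤ`, `q : ℕ → ℕ` with `q n ≥ 1`,
`p n / q n ≠ ξ` for all `n`, `q n → ∞`, and
`‖ξ − p n / q n‖_ℓ ≤ 1/(max |p n| (q n))^(1+δ)` for all `n`, then `ξ` is not
the image of a rational number in `ℚ_ℓ`. -/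
theorem padic_irrationality_criterion (ℓ : ℕ) [Fact ℓ.Prime] (ξ : ℚ_[ℓ])
    (δ : ℝ) (hδ : 0 < δ) (p : ℕ → ℤ) (q : ℕ → ℕ)
    (hq1 : ∀ n, 1 ≤ q n)
    (hne : ∀ n, ((p n : ℚ_[ℓ]) / (q n : ℚ_[ℓ])) ≠ ξ)
    (hqtop : Filter.Tendsto q Filter.atTop Filter.atTop)
    (hbound : ∀ n, ‖ξ - (p n : ℚ_[ℓ]) / (q n : ℚ_[ℓ])‖
      ≤ 1 / (max (|p n| : ℝ) (q n : ℝ)) ^ ((1 : ℝ) + δ)) :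
    ¬ ∃ r : ℚ, ξ = (r : ℚ_[ℓ]) := by
  rintro ⟨r, rfl⟩
  set a : ℤ := r.num with ha
  set b : ℕ := r.den with hb
  have hb0 : 0 < b := r.pos
  set C : ℝ := |(a : ℝ)| + b with hC
  have hC1 : 1 ≤ C := by
    have : (1:ℝ) ≤ (b:ℝ) := by exact_mod_cast hb0
    have := abs_nonneg (a:ℝ)
    simp only [hC]; linarith
  have hC0 : 0 < C := lt_of_lt_of_le one_pos hC1
  -- choose n large
  obtain ⟨n, hn⟩ := (hqtop.eventually_ge_atTop (⌈C ^ ((1:ℝ)/δ)⌉₊ + 1)).exists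
  set M : ℝ := max (|p n| : ℝ) (q n : ℝ) with hM
  have hq0 : (0:ℝ) < (q n : ℝ) := by exact_mod_cast hq1 n
  have hM1 : (1:ℝ) ≤ M := le_trans (by exact_mod_cast hq1 n) (le_max_right _ _)
  have hM0 : (0:ℝ) < M := lt_of_lt_of_le one_pos hM1
  set N : ℤ := a * q n - (b : ℤ) * p n with hN
  have hbQ : (b : ℚ_[ℓ]) ≠ 0 := Nat.cast_ne_zero.mpr hb0.ne'
  have hqQ : (q n : ℚ_[ℓ]) ≠ 0 := Nat.cast_ne_zero.mpr (Nat.one_le_iff_ne_zero.mp (hq1 n))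
  have hN0 : N ≠ 0 := by
    intro h0
    apply hne n
    have hqz : ((q n : ℚ)) ≠ 0 := Nat.cast_ne_zero.mpr (Nat.one_le_iff_ne_zero.mp (hq1 n))
    have hbz : ((b : ℚ)) ≠ 0 := Nat.cast_ne_zero.mpr hb0.ne'
    have hr : (r : ℚ) = (p n : ℚ) / (q n : ℚ) := by
      rw [← Rat.num_div_den r, ← ha, ← hb, div_eq_div_iff hbz hqz]
      have : a * (q n : ℤ) = p n * (b : ℤ) := by linarith [hN ▸ h0]
      exact_mod_cast this
    have := congrArg (fun x : ℚ => (x : ℚ_[ℓ])) hr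
    simpa using this.symm
  -- key identity
  have hdiff : (r : ℚ_[ℓ]) - (p n : ℚ_[ℓ]) / (q n : ℚ_[ℓ])
      = (N : ℚ_[ℓ]) / ((b : ℚ_[ℓ]) * (q n : ℚ_[ℓ])) := by
    have hr : (r : ℚ_[ℓ]) = (a : ℚ_[ℓ]) / (b : ℚ_[ℓ]) := by
      rw [← Rat.num_div_den r, ← ha, ← hb]
      push_cast
      ring
    rw [hr, hN]
    field_simp
    push_cast
    rfl
  -- lower bound on norm
  have hden1 : ‖(b : ℚ_[ℓ]) * (q n : ℚ_[ℓ])‖ ≤ 1 := by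
    have h := Padic.norm_int_le_one (p := ℓ) ((b : ℤ) * (q n : ℤ))
    push_cast at h
    exact h
  have hdenpos : 0 < ‖(b : ℚ_[ℓ]) * (q n : ℚ_[ℓ])‖ :=
    norm_pos_iff.mpr (mul_ne_zero hbQ hqQ)
  have hlow : (1 : ℝ) / |(N : ℝ)| ≤ ‖(r : ℚ_[ℓ]) - (p n : ℚ_[ℓ]) / (q n : ℚ_[ℓ])‖ := by
    rw [hdiff, norm_div]
    calc (1 : ℝ) / |(N : ℝ)| ≤ ‖(N : ℚ_[ℓ])‖ := norm_int_ge ℓ hN0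
    _ ≤ ‖(N : ℚ_[ℓ])‖ / ‖(b : ℚ_[ℓ]) * (q n : ℚ_[ℓ])‖ :=
        le_div_self (norm_nonneg _) hdenpos hden1
  -- upper bound on |N|
  have habsN : |(N : ℝ)| ≤ C * M := by
    have h1 : |(N : ℝ)| ≤ |(a : ℝ)| * (q n : ℝ) + (b : ℝ) * |(p n : ℝ)| := by
      rw [hN]
      push_cast
      calc |(a:ℝ) * q n - (b:ℝ) * p n| ≤ |(a:ℝ) * q n| + |(b:ℝ) * p n| := abs_sub _ _
      _ = |(a:ℝ)| * (q n : ℝ) + (b:ℝ) * |(p n : ℝ)| := by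
          rw [abs_mul, abs_mul, abs_of_nonneg hq0.le, abs_of_nonneg (by positivity : (0:ℝ) ≤ (b:ℝ))]
    have h2 : (q n : ℝ) ≤ M := le_max_right _ _
    have h3 : |(p n : ℝ)| ≤ M := by
      rw [hM]
      exact le_max_left _ _
    nlinarith [abs_nonneg (a:ℝ), (by positivity : (0:ℝ) ≤ (b:ℝ))]
  have hNpos : (0:ℝ) < |(N : ℝ)| := by
    have : (N : ℝ) ≠ 0 := Int.cast_ne_zero.mpr hN0
    exact abs_pos.mpr this
  -- chain of inequalities
  have hCM : (1:ℝ) / (C * M) ≤ 1 / M ^ ((1:ℝ) + δ) := by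
    calc (1:ℝ) / (C * M) ≤ 1 / |(N : ℝ)| := by
          apply one_div_le_one_div_of_le hNpos habsN
    _ ≤ ‖(r : ℚ_[ℓ]) - (p n : ℚ_[ℓ]) / (q n : ℚ_[ℓ])‖ := hlow
    _ ≤ 1 / M ^ ((1:ℝ) + δ) := hbound n
  have hMle : M ^ ((1:ℝ) + δ) ≤ C * M :=
    le_of_one_div_le_one_div (by positivity) hCM
  have hsplit : M ^ ((1:ℝ) + δ) = M * M ^ δ := by
    rw [Real.rpow_add hM0, Real.rpow_one]
  have hMδC : M ^ δ ≤ C := by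
    have := hsplit ▸ hMle
    have h := (mul_le_mul_iff_right₀ hM0).mp (by linarith [this] : M * M ^ δ ≤ M * C)
    linarith
  -- but q n is large
  have hqbig : C ^ ((1:ℝ)/δ) < (q n : ℝ) := by
    calc C ^ ((1:ℝ)/δ) ≤ (⌈C ^ ((1:ℝ)/δ)⌉₊ : ℝ) := Nat.le_ceil _
    _ < (⌈C ^ ((1:ℝ)/δ)⌉₊ : ℝ) + 1 := by linarith
    _ ≤ (q n : ℝ) := by exact_mod_cast hn
  have hCpow : C < (q n : ℝ) ^ δ := by
    have h1 : (C ^ ((1:ℝ)/δ)) ^ δ < (q n : ℝ) ^ δ :=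
      Real.rpow_lt_rpow (Real.rpow_nonneg hC0.le _) hqbig hδ
    have h2 : (C ^ ((1:ℝ)/δ)) ^ δ = C := by
      rw [← Real.rpow_mul hC0.le, one_div_mul_cancel hδ.ne', Real.rpow_one]
    linarith [h2 ▸ h1]
  have hqM : (q n : ℝ) ^ δ ≤ M ^ δ :=
    Real.rpow_le_rpow hq0.le (le_max_right _ _) hδ.le
  linarith
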